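/- Let K be a suitable convolution kernel on ℝ^d and let E₀ be locally K-outward minimizing in Ω, and set E₁ := T_K E₀. Then for every measurable G ⊆ Ω \ E₁ one has P_K(E₁ ∪ G) + S_K(G) ≥ P_K(E₁) + 2 ∫_G (K ∗ χ_{E₀ \ E₁}) dx. In particular, E₁ is also locally K-outward minimizing in Ω. -/

import Mathlib

open MeasureTheory
open scoped ENNReal

/-- The convolution of a kernel `K` with the indicator function of a set `E`. -/
noncomputable def conv {d : ℕ} (K : EuclideanSpace ℝ (Fin d) → ℝ)
    (E : Set (EuclideanSpace ℝ (Fin d))) (x : EuclideanSpace ℝ (Fin d)) : ℝ :=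
  ∫ y, K (x - y) * E.indicator (fun _ => (1 : ℝ)) y

/-- The thresholding operator `T_K E = {x | (K ∗ χ_E)(x) > 1/2}`. -/
def thresh {d : ℕ} (K : EuclideanSpace ℝ (Fin d) → ℝ)
    (E : Set (EuclideanSpace ℝ (Fin d))) : Set (EuclideanSpace ℝ (Fin d)) :=
  {x | 1 / 2 < conv K E x}

/-- The `K`-perimeter `P_K(D) = ∫_{Dᶜ} K ∗ χ_D`, as a value in `[0,∞]`. -/
noncomputable def PK {d : ℕ} (K : EuclideanSpace ℝ (Fin d) → ℝ)
    (D : Set (EuclideanSpace ℝ (Fin d))) : ℝ≥0∞ :=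
  ∫⁻ x in Dᶜ, ENNReal.ofReal (conv K D x)

/-- The self-interaction `S_K(D) = ∫_D K ∗ χ_D`, as a value in `[0,∞]`. -/
noncomputable def SK {d : ℕ} (K : EuclideanSpace ℝ (Fin d) → ℝ)
    (D : Set (EuclideanSpace ℝ (Fin d))) : ℝ≥0∞ :=
  ∫⁻ x in D, ENNReal.ofReal (conv K D x)

/-- `E₀` is locally `K`-outward minimizing in `Ω`: `E₀` is a measurable subset of `Ω` with
    finite `K`-perimeter, `Ω` is sufficiently large (`Ω ⊇ T_K E₀ ∪ E₀`), and
    `P_K(E₀ ∪ F) + S_K(F) ≥ P_K(E₀)` for all measurable `F ⊆ Ω \ E₀`. -/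
def LocallyOutwardMin {d : ℕ} (K : EuclideanSpace ℝ (Fin d) → ℝ)
    (E₀ Ω : Set (EuclideanSpace ℝ (Fin d))) : Prop :=
  MeasurableSet E₀ ∧ E₀ ⊆ Ω ∧ PK K E₀ ≠ ⊤ ∧ thresh K E₀ ∪ E₀ ⊆ Ω ∧
  ∀ F : Set (EuclideanSpace ℝ (Fin d)), MeasurableSet F → F ⊆ Ω \ E₀ →
    PK K E₀ ≤ PK K (E₀ ∪ F) + SK K F


namespace ThreshAux

variable {d : ℕ}

/-- ENNReal-valued convolution of a kernel with the indicator of a set. -/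
noncomputable def lconv (κ : EuclideanSpace ℝ (Fin d) → ℝ≥0∞)
    (A : Set (EuclideanSpace ℝ (Fin d))) (x : EuclideanSpace ℝ (Fin d)) : ℝ≥0∞ :=
  ∫⁻ y in A, κ (x - y)

/-- interaction between two sets. -/
noncomputable def LL (κ : EuclideanSpace ℝ (Fin d) → ℝ≥0∞)
    (A B : Set (EuclideanSpace ℝ (Fin d))) : ℝ≥0∞ :=
  ∫⁻ x in A, lconv κ B x

variable {κ : EuclideanSpace ℝ (Fin d) → ℝ≥0∞}
variable {A B C : Set (EuclideanSpace ℝ (Fin d))} {x : EuclideanSpace ℝ (Fin d)}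

theorem lconv_mono (h : A ⊆ B) : lconv κ A x ≤ lconv κ B x :=
  lintegral_mono_set h

theorem lconv_total (hκ : Measurable κ) (hκ1 : ∫⁻ x, κ x = 1) (x : EuclideanSpace ℝ (Fin d)) :
    ∫⁻ y, κ (x - y) = 1 := by
  rw [(Measure.measurePreserving_sub_left volume x).lintegral_comp hκ]; exact hκ1

theorem lconv_le_one (hκ : Measurable κ) (hκ1 : ∫⁻ x, κ x = 1) : lconv κ A x ≤ 1 := by
  calc lconv κ A x ≤ ∫⁻ y, κ (x - y) := by
        rw [← Measure.restrict_univ (μ := (volume : Measure (EuclideanSpace ℝ (Fin d))))]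
        exact lintegral_mono_set (Set.subset_univ A)
    _ = 1 := lconv_total hκ hκ1 x

theorem lconv_congr (h : A =ᵐ[volume] B) : lconv κ A = lconv κ B := by
  funext x; unfold lconv; rw [Measure.restrict_congr_set h]

theorem lconv_union (hd : Disjoint A B) (hB : MeasurableSet B) :
    lconv κ (A ∪ B) x = lconv κ A x + lconv κ B x :=
  lintegral_union hB hd

theorem meas_lconv (hκ : Measurable κ) (hA : MeasurableSet A) : Measurable (lconv κ A) := by
  have hf : Measurable fun p : (EuclideanSpace ℝ (Fin d)) × (EuclideanSpace ℝ (Fin d)) =>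
      (Set.univ ×ˢ A).indicator (fun p : (EuclideanSpace ℝ (Fin d)) × (EuclideanSpace ℝ (Fin d)) =>
        κ (p.1 - p.2)) p :=
    (hκ.comp (measurable_fst.sub measurable_snd)).indicator (MeasurableSet.univ.prod hA)
  have : lconv κ A = fun x => ∫⁻ y,
      (Set.univ ×ˢ A).indicator (fun p : (EuclideanSpace ℝ (Fin d)) × (EuclideanSpace ℝ (Fin d)) =>
        κ (p.1 - p.2)) (x, y) := by
    funext x
    rw [lconv, ← lintegral_indicator hA]
    congr 1
    funext y
    by_cases hy : y ∈ A <;> simp [Set.indicator_apply, hy]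
  rw [this]
  exact hf.lintegral_prod_right'

theorem LL_symm (hκ : Measurable κ) (hκe : ∀ x, κ (-x) = κ x) : LL κ A B = LL κ B A := by
  have hm : AEMeasurable (Function.uncurry fun x y : EuclideanSpace ℝ (Fin d) => κ (x - y))
      ((volume.restrict A).prod (volume.restrict B)) :=
    (hκ.comp (measurable_fst.sub measurable_snd)).aemeasurable
  unfold LL lconv
  rw [lintegral_lintegral_swap hm]
  refine lintegral_congr fun y => lintegral_congr fun x => ?_
  rw [← hκe (y - x), neg_sub]

theorem LL_univ (hκ : Measurable κ) (hκ1 : ∫⁻ x, κ x = 1) :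
    LL κ Set.univ B = volume B := by
  have hm : AEMeasurable (Function.uncurry fun x y : EuclideanSpace ℝ (Fin d) => κ (x - y))
      ((volume.restrict Set.univ).prod (volume.restrict B)) :=
    (hκ.comp (measurable_fst.sub measurable_snd)).aemeasurable
  unfold LL lconv
  rw [lintegral_lintegral_swap hm]
  rw [Measure.restrict_univ]
  calc ∫⁻ y in B, ∫⁻ x, κ (x - y) = ∫⁻ _ in B, (1 : ℝ≥0∞) :=
        lintegral_congr fun y => (lintegral_sub_right_eq_self κ y).trans hκ1
    _ = volume B := setLIntegral_one B

theorem LL_union_left (hd : Disjoint A B) (hB : MeasurableSet B) :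
    LL κ (A ∪ B) C = LL κ A C + LL κ B C :=
  lintegral_union hB hd

theorem LL_union_right (hκ : Measurable κ) (hd : Disjoint B C)
    (hB : MeasurableSet B) (hC : MeasurableSet C) :
    LL κ A (B ∪ C) = LL κ A B + LL κ A C := by
  unfold LL
  rw [← lintegral_add_left (meas_lconv hκ hB)]
  exact lintegral_congr fun x => lconv_union hd hC

theorem LL_mono_left (h : A ⊆ B) : LL κ A C ≤ LL κ B C :=
  lintegral_mono_set h

theorem LL_mono_right (h : B ⊆ C) : LL κ A B ≤ LL κ A C :=
  lintegral_mono fun _ => lconv_mono h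

theorem LL_le_measure (hκ : Measurable κ) (hκ1 : ∫⁻ x, κ x = 1) :
    LL κ A B ≤ volume A := by
  calc LL κ A B ≤ ∫⁻ _ in A, (1 : ℝ≥0∞) := lintegral_mono fun _ => lconv_le_one hκ hκ1
    _ = volume A := setLIntegral_one A

/-- The key algebraic identity for disjoint sets `E`, `F`:
`P(E∪F) + S(F) + 2·L(F,E) = P(E) + |F|`. -/
theorem key_identity (hκ : Measurable κ) (hκe : ∀ x, κ (-x) = κ x) (hκ1 : ∫⁻ x, κ x = 1)
    {E F : Set (EuclideanSpace ℝ (Fin d))} (hE : MeasurableSet E) (hF : MeasurableSet F)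
    (hd : Disjoint E F) :
    LL κ (E ∪ F)ᶜ (E ∪ F) + LL κ F F + (LL κ F E + LL κ F E) =
      LL κ Eᶜ E + volume F := by
  have hFEc : F ⊆ Eᶜ := Set.disjoint_left.mp hd.symm
  have h1 : LL κ (E ∪ F)ᶜ (E ∪ F) = LL κ (Eᶜ ∩ Fᶜ) E + LL κ (Eᶜ ∩ Fᶜ) F := by
    rw [Set.compl_union]
    exact LL_union_right hκ hd hE hF
  have hEc : Eᶜ = (Eᶜ ∩ Fᶜ) ∪ F := by
    ext x
    by_cases hx : x ∈ F
    · simp [hx, hFEc hx]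
    · simp [hx]
  have hdj : Disjoint (Eᶜ ∩ Fᶜ) F := Set.disjoint_left.mpr fun x hx => hx.2
  have h2 : LL κ Eᶜ E = LL κ (Eᶜ ∩ Fᶜ) E + LL κ F E := by
    conv_lhs => rw [hEc]
    exact LL_union_left hdj hF
  have huniv : (Set.univ : Set (EuclideanSpace ℝ (Fin d))) = (Eᶜ ∩ Fᶜ) ∪ (E ∪ F) := by
    ext x; by_cases hxE : x ∈ E <;> by_cases hxF : x ∈ F <;> simp [hxE, hxF]
  have h3 : volume F = LL κ (Eᶜ ∩ Fᶜ) F + (LL κ E F + LL κ F F) := by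
    rw [← LL_univ (B := F) hκ hκ1, huniv,
      LL_union_left (by rw [← Set.compl_union]; exact disjoint_compl_left) (hE.union hF),
      LL_union_left hd hF]
  have hsymm : LL κ E F = LL κ F E := LL_symm hκ hκe
  rw [h1, h2, h3, hsymm]
  ring

end ThreshAux

open ThreshAux

/-- If `E₀` is locally `K`-outward minimizing in `Ω` and `E₁ = T_K E₀`, then for every
    measurable `G ⊆ Ω \ E₁`,
    `P_K(E₁ ∪ G) + S_K(G) ≥ P_K(E₁) + 2 ∫_G K ∗ χ_{E₀ \ E₁}`; in particular `E₁` is also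
    locally `K`-outward minimizing in `Ω`. -/
theorem thresholding_inherits_local_outward_minimality
    {d : ℕ} (K : EuclideanSpace ℝ (Fin d) → ℝ)
    (hK0 : ∀ x, 0 ≤ K x) (hKeven : ∀ x, K (-x) = K x)
    (hKint : Integrable K) (hK1 : ∫ x, K x = 1)
    (E₀ Ω : Set (EuclideanSpace ℝ (Fin d)))
    (h : LocallyOutwardMin K E₀ Ω) :
    (∀ G : Set (EuclideanSpace ℝ (Fin d)), MeasurableSet G → G ⊆ Ω \ thresh K E₀ →
      PK K (thresh K E₀) +
          2 * ∫⁻ x in G, ENNReal.ofReal (conv K (E₀ \ thresh K E₀) x) ≤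
        PK K (thresh K E₀ ∪ G) + SK K G) ∧
    LocallyOutwardMin K (thresh K E₀) Ω := by
  classical
  obtain ⟨hE₀m, hE₀Ω, hPKfin, hTΩ, hmin⟩ := h
  -- a measurable, even, nonnegative a.e.-representative of `K`
  obtain ⟨K', hK'sm, hKK'⟩ := hKint.aestronglyMeasurable
  set K3 : EuclideanSpace ℝ (Fin d) → ℝ := fun x => max (max (K' x) (K' (-x))) 0 with hK3def
  have hK3m : Measurable K3 :=
    ((hK'sm.measurable).max ((hK'sm.measurable).comp measurable_neg)).max measurable_const
  have hK3even : ∀ x, K3 (-x) = K3 x := by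
    intro x; simp only [hK3def, neg_neg]; rw [max_comm (K' (-x)) (K' x)]
  have hKnegae : (fun x => K (-x)) =ᵐ[volume] fun x => K' (-x) :=
    hKK'.comp_tendsto
      (Measure.measurePreserving_neg
        (volume : Measure (EuclideanSpace ℝ (Fin d)))).quasiMeasurePreserving.tendsto_ae
  have hK3ae : K3 =ᵐ[volume] K := by
    filter_upwards [hKK', hKnegae] with x h1 h2
    simp only [hK3def]
    rw [← h1, ← h2, hKeven x, max_self, max_eq_left (hK0 x)]
  set κ : EuclideanSpace ℝ (Fin d) → ℝ≥0∞ := fun x => ENNReal.ofReal (K3 x) with hκdef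
  have hκm : Measurable κ := hK3m.ennreal_ofReal
  have hκe : ∀ x, κ (-x) = κ x := fun x => by simp only [hκdef, hK3even x]
  have hK3int : Integrable K3 := hKint.congr hK3ae.symm
  have hκ1 : ∫⁻ x, κ x = 1 := by
    have h0 := ofReal_integral_eq_lintegral_ofReal hK3int
      (Filter.Eventually.of_forall fun x => le_max_right _ _)
    rw [integral_congr_ae hK3ae, hK1, ENNReal.ofReal_one] at h0
    exact h0.symm
  -- the bridge between the real-valued and the ℝ≥0∞-valued convolutions
  have hbridge : ∀ A : Set (EuclideanSpace ℝ (Fin d)), MeasurableSet A → ∀ x,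
      ENNReal.ofReal (conv K A x) = lconv κ A x := by
    intro A hA x
    have hmp := Measure.measurePreserving_sub_left
      (volume : Measure (EuclideanSpace ℝ (Fin d))) x
    have haex : (fun y => K (x - y)) =ᵐ[volume] fun y => K3 (x - y) :=
      hK3ae.symm.comp_tendsto hmp.quasiMeasurePreserving.tendsto_ae
    have h1 : conv K A x = ∫ y in A, K3 (x - y) := by
      unfold conv
      rw [show (fun y => K (x - y) * A.indicator (fun _ => (1 : ℝ)) y)
          = A.indicator (fun y => K (x - y)) by
        funext y; by_cases hy : y ∈ A <;> simp [Set.indicator_apply, hy]]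
      rw [integral_indicator hA]
      exact integral_congr_ae (ae_restrict_of_ae haex)
    rw [h1, ofReal_integral_eq_lintegral_ofReal (hK3int.comp_sub_left x).integrableOn
      (Filter.Eventually.of_forall fun y => le_max_right _ _)]
    rfl
  have hPK : ∀ D : Set (EuclideanSpace ℝ (Fin d)), MeasurableSet D →
      PK K D = LL κ Dᶜ D := fun D hD => lintegral_congr fun x => hbridge D hD x
  have hSK : ∀ D : Set (EuclideanSpace ℝ (Fin d)), MeasurableSet D →
      SK K D = LL κ D D := fun D hD => lintegral_congr fun x => hbridge D hD x
  have hhalf : ENNReal.ofReal (1 / 2 : ℝ) = 2⁻¹ := by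
    rw [one_div, ENNReal.ofReal_inv_of_pos two_pos, ENNReal.ofReal_ofNat]
  have hthresh : ∀ A : Set (EuclideanSpace ℝ (Fin d)), MeasurableSet A →
      thresh K A = {x | (2⁻¹ : ℝ≥0∞) < lconv κ A x} := by
    intro A hA
    ext x
    simp only [thresh, Set.mem_setOf_eq]
    rw [← hbridge A hA x, ← hhalf,
      ENNReal.ofReal_lt_ofReal_iff_of_nonneg (by norm_num : (0 : ℝ) ≤ 1 / 2)]
  set E₁ := thresh K E₀ with hE₁def
  have hglconvm : Measurable (lconv κ E₀) := meas_lconv hκm hE₀m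
  have hE₁eq : E₁ = {x | (2⁻¹ : ℝ≥0∞) < lconv κ E₀ x} := hthresh E₀ hE₀m
  have hE₁m : MeasurableSet E₁ := by
    rw [hE₁eq]; exact measurableSet_lt measurable_const hglconvm
  have hE₁Ω : E₁ ⊆ Ω := fun x hx => hTΩ (Or.inl hx)
  have hPKE₀ : PK K E₀ = LL κ E₀ᶜ E₀ := hPK E₀ hE₀m
  have hfinLL : LL κ E₀ᶜ E₀ ≠ ⊤ := by rw [← hPKE₀]; exact hPKfin
  -- cancellation consequence of outward minimality
  have hcancel : ∀ F : Set (EuclideanSpace ℝ (Fin d)), MeasurableSet F → F ⊆ Ω \ E₀ →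
      LL κ F E₀ + LL κ F E₀ ≤ volume F := by
    intro F hF hFΩ
    have hd : Disjoint E₀ F := Set.disjoint_left.mpr fun x hx hxF => (hFΩ hxF).2 hx
    have hkey := key_identity hκm hκe hκ1 hE₀m hF hd
    have hmin' := hmin F hF hFΩ
    rw [hPK E₀ hE₀m, hPK (E₀ ∪ F) (hE₀m.union hF), hSK F hF] at hmin'
    have hle : LL κ E₀ᶜ E₀ + (LL κ F E₀ + LL κ F E₀)
        ≤ LL κ E₀ᶜ E₀ + volume F := by
      calc LL κ E₀ᶜ E₀ + (LL κ F E₀ + LL κ F E₀)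
          ≤ (LL κ (E₀ ∪ F)ᶜ (E₀ ∪ F) + LL κ F F) + (LL κ F E₀ + LL κ F E₀) :=
            add_le_add_left hmin' _
        _ = LL κ E₀ᶜ E₀ + volume F := by rw [← hkey]
    exact (ENNReal.add_le_add_iff_left hfinLL).mp hle
  -- Step A : the set E₁ \ E₀ is null
  have hμF₀ : volume (E₁ \ E₀) = 0 := by
    set F₀ := E₁ \ E₀ with hF₀def
    have hF₀m : MeasurableSet F₀ := hE₁m.diff hE₀m
    have hF₀Ω : F₀ ⊆ Ω \ E₀ := fun x hx => ⟨hE₁Ω hx.1, hx.2⟩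
    have hF₀sub : F₀ ⊆ E₀ᶜ := fun x hx => hx.2
    have hgt : ∀ x ∈ F₀, (2⁻¹ : ℝ≥0∞) < lconv κ E₀ x := by
      intro x hx
      have hx1 := hx.1
      rw [hE₁eq] at hx1
      exact hx1
    have hμF₀top : volume F₀ ≠ ⊤ := by
      have h1 : volume F₀ ≤ 2 * LL κ E₀ᶜ E₀ := by
        calc volume F₀ = ∫⁻ _ in F₀, (1 : ℝ≥0∞) := (setLIntegral_one F₀).symm
          _ ≤ ∫⁻ x in F₀, 2 * lconv κ E₀ x := by
              refine setLIntegral_mono (hglconvm.const_mul 2) fun x hx => ?_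
              calc (1 : ℝ≥0∞) = 2 * 2⁻¹ :=
                    (ENNReal.mul_inv_cancel two_ne_zero ENNReal.ofNat_ne_top).symm
                _ ≤ 2 * lconv κ E₀ x := mul_le_mul_right (hgt x hx).le 2
          _ = 2 * LL κ F₀ E₀ := lintegral_const_mul 2 hglconvm
          _ ≤ 2 * LL κ E₀ᶜ E₀ := mul_le_mul_right (LL_mono_left hF₀sub) 2
      exact ne_top_of_le_ne_top (ENNReal.mul_ne_top ENNReal.ofNat_ne_top hfinLL) h1
    have h2LL : LL κ F₀ E₀ + LL κ F₀ E₀ ≤ volume F₀ := hcancel F₀ hF₀m hF₀Ω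
    have hIge : 2⁻¹ * volume F₀ ≤ LL κ F₀ E₀ := by
      calc 2⁻¹ * volume F₀ = ∫⁻ _ in F₀, (2⁻¹ : ℝ≥0∞) := (setLIntegral_const F₀ 2⁻¹).symm
        _ ≤ LL κ F₀ E₀ := setLIntegral_mono hglconvm fun x hx => (hgt x hx).le
    have hhalfne : 2⁻¹ * volume F₀ ≠ ⊤ :=
      ENNReal.mul_ne_top (by simp) hμF₀top
    have hIle : LL κ F₀ E₀ ≤ 2⁻¹ * volume F₀ := by
      refine (ENNReal.add_le_add_iff_left hhalfne).mp ?_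
      calc 2⁻¹ * volume F₀ + LL κ F₀ E₀ ≤ LL κ F₀ E₀ + LL κ F₀ E₀ :=
            add_le_add_left hIge _
        _ ≤ volume F₀ := h2LL
        _ = 2⁻¹ * volume F₀ + 2⁻¹ * volume F₀ := by
            rw [← add_mul, ENNReal.inv_two_add_inv_two, one_mul]
    have hsub : ∫⁻ x in F₀, (lconv κ E₀ x - 2⁻¹) = 0 := by
      rw [lintegral_sub measurable_const
        (by rw [setLIntegral_const]; exact ENNReal.mul_ne_top (by simp) hμF₀top)
        ((ae_restrict_iff' hF₀m).mpr (Filter.Eventually.of_forall fun x hx => (hgt x hx).le))]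
      rw [setLIntegral_const]
      exact tsub_eq_zero_iff_le.mpr hIle
    have hzero := (lintegral_eq_zero_iff (hglconvm.sub measurable_const)).mp hsub
    have hP : ∀ᵐ x ∂(volume.restrict F₀), x ∉ F₀ := by
      filter_upwards [hzero] with x hx hxF
      exact absurd (tsub_eq_zero_iff_le.mp hx) (not_le.mpr (hgt x hxF))
    have h0 : volume.restrict F₀ F₀ = 0 := by
      have h0' := ae_iff.mp hP
      simpa [not_not] using h0'
    rwa [Measure.restrict_apply_self] at h0
  -- Step B : consequences
  have hE₁ae : E₁ =ᵐ[volume] ((E₀ ∩ E₁ : Set (EuclideanSpace ℝ (Fin d)))) := by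
    rw [MeasureTheory.ae_eq_set]
    constructor
    · refine measure_mono_null (fun x hx => ?_) hμF₀
      exact ⟨hx.1, fun hxE₀ => hx.2 ⟨hxE₀, hx.1⟩⟩
    · refine measure_mono_null (fun x hx => ?_) (measure_empty (μ := volume))
      exact absurd hx.1.2 hx.2
  have hlconvE₁ : lconv κ E₁ = lconv κ (E₀ ∩ E₁) := lconv_congr hE₁ae
  have hlconv_le : ∀ x, lconv κ E₁ x ≤ lconv κ E₀ x := fun x => by
    rw [hlconvE₁]; exact lconv_mono Set.inter_subset_left
  have hLLright : ∀ A : Set (EuclideanSpace ℝ (Fin d)),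
      LL κ A E₁ = LL κ A (E₀ ∩ E₁) := fun A => by
    unfold LL; rw [hlconvE₁]
  -- lconv of complement
  have hcompl : ∀ x, lconv κ E₀ x + lconv κ E₀ᶜ x = 1 := fun x => by
    rw [lconv, lconv, lintegral_add_compl _ hE₀m]
    exact lconv_total hκm hκ1 x
  have hE₀dm : MeasurableSet (E₀ \ E₁) := hE₀m.diff hE₁m
  have hle_half : ∀ x, x ∉ E₁ → lconv κ E₀ x ≤ 2⁻¹ := by
    intro x hx
    by_contra hc
    exact hx (by rw [hE₁eq]; exact not_le.mp hc)
  have hμdiff_top : volume (E₀ \ E₁) ≠ ⊤ := by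
    have hgehalf : ∀ x ∈ E₀ \ E₁, (2⁻¹ : ℝ≥0∞) ≤ lconv κ E₀ᶜ x := by
      intro x hx
      have h1 := hcompl x
      have h2 := hle_half x hx.2
      by_contra hc
      have hlt : (1 : ℝ≥0∞) < 1 := by
        calc (1 : ℝ≥0∞) = lconv κ E₀ x + lconv κ E₀ᶜ x := h1.symm
          _ ≤ 2⁻¹ + lconv κ E₀ᶜ x := add_le_add_left h2 _
          _ < 2⁻¹ + 2⁻¹ := ENNReal.add_lt_add_left (by simp) (not_le.mp hc)
          _ = 1 := ENNReal.inv_two_add_inv_two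
      exact lt_irrefl _ hlt
    have hmc : Measurable (lconv κ E₀ᶜ) := meas_lconv hκm hE₀m.compl
    have h1 : volume (E₀ \ E₁) ≤ 2 * LL κ E₀ᶜ E₀ := by
      calc volume (E₀ \ E₁) = ∫⁻ _ in E₀ \ E₁, (1 : ℝ≥0∞) := (setLIntegral_one _).symm
        _ ≤ ∫⁻ x in E₀ \ E₁, 2 * lconv κ E₀ᶜ x := by
            refine setLIntegral_mono (hmc.const_mul 2) fun x hx => ?_
            calc (1 : ℝ≥0∞) = 2 * 2⁻¹ :=
                  (ENNReal.mul_inv_cancel two_ne_zero ENNReal.ofNat_ne_top).symm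
              _ ≤ 2 * lconv κ E₀ᶜ x := mul_le_mul_right (hgehalf x hx) 2
        _ = 2 * LL κ (E₀ \ E₁) E₀ᶜ := lintegral_const_mul 2 hmc
        _ ≤ 2 * LL κ E₀ E₀ᶜ :=
            mul_le_mul_right (LL_mono_left Set.diff_subset) 2
        _ = 2 * LL κ E₀ᶜ E₀ := by rw [LL_symm hκm hκe]
    exact ne_top_of_le_ne_top (ENNReal.mul_ne_top ENNReal.ofNat_ne_top hfinLL) h1
  have hPKE₁ : PK K E₁ = LL κ E₁ᶜ E₁ := hPK E₁ hE₁m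
  have hPKE₁fin : LL κ E₁ᶜ E₁ ≠ ⊤ := by
    have hsetsplit : E₁ᶜ = (E₁ᶜ ∩ E₀ᶜ) ∪ (E₁ᶜ ∩ E₀) := by
      ext x; by_cases hx : x ∈ E₀ <;> simp [hx]
    have hdisj : Disjoint (E₁ᶜ ∩ E₀ᶜ) (E₁ᶜ ∩ E₀) :=
      Set.disjoint_left.mpr fun x hx hx' => hx.2 hx'.2
    have hsplit : LL κ E₁ᶜ E₀ = LL κ (E₁ᶜ ∩ E₀ᶜ) E₀ + LL κ (E₁ᶜ ∩ E₀) E₀ := by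
      conv_lhs => rw [hsetsplit]
      exact LL_union_left hdisj (hE₁m.compl.inter hE₀m)
    have hbound : LL κ E₁ᶜ E₁ ≤ LL κ E₀ᶜ E₀ + volume (E₀ \ E₁) := by
      calc LL κ E₁ᶜ E₁ = LL κ E₁ᶜ (E₀ ∩ E₁) := hLLright E₁ᶜ
        _ ≤ LL κ E₁ᶜ E₀ := LL_mono_right Set.inter_subset_left
        _ = LL κ (E₁ᶜ ∩ E₀ᶜ) E₀ + LL κ (E₁ᶜ ∩ E₀) E₀ := hsplit
        _ ≤ LL κ E₀ᶜ E₀ + volume (E₀ \ E₁) := by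
            refine add_le_add (LL_mono_left Set.inter_subset_right) ?_
            calc LL κ (E₁ᶜ ∩ E₀) E₀ ≤ LL κ (E₀ \ E₁) E₀ :=
                  LL_mono_left fun x hx => ⟨hx.2, hx.1⟩
              _ ≤ volume (E₀ \ E₁) := LL_le_measure hκm hκ1
    exact ne_top_of_le_ne_top (ENNReal.add_ne_top.mpr ⟨hfinLL, hμdiff_top⟩) hbound
  -- the main inequality
  have main : ∀ G : Set (EuclideanSpace ℝ (Fin d)), MeasurableSet G → G ⊆ Ω \ E₁ →
      PK K E₁ + 2 * ∫⁻ x in G, ENNReal.ofReal (conv K (E₀ \ E₁) x) ≤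
        PK K (E₁ ∪ G) + SK K G := by
    intro G hG hGΩ
    have hGE₁ : Disjoint E₁ G := Set.disjoint_left.mpr fun x hx hxG => (hGΩ hxG).2 hx
    have hGsub : G ⊆ E₁ᶜ := fun x hx => (hGΩ hx).2
    have hIG : ∫⁻ x in G, ENNReal.ofReal (conv K (E₀ \ E₁) x) = LL κ G (E₀ \ E₁) :=
      lintegral_congr fun x => hbridge _ hE₀dm x
    rw [hPK E₁ hE₁m, hPK (E₁ ∪ G) (hE₁m.union hG), hSK G hG, hIG]
    have hkey := key_identity hκm hκe hκ1 hE₁m hG hGE₁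
    have hcfin : LL κ G E₁ ≠ ⊤ := by
      have hs : LL κ G E₁ = LL κ E₁ G := LL_symm hκm hκe
      rw [hs]
      refine ne_top_of_le_ne_top hPKE₁fin ?_
      calc LL κ E₁ G ≤ LL κ E₁ E₁ᶜ := LL_mono_right hGsub
        _ = LL κ E₁ᶜ E₁ := LL_symm hκm hκe
    -- core estimate : LL G E₀ + LL G E₀ ≤ volume G
    have hcore : LL κ G E₀ + LL κ G E₀ ≤ volume G := by
      set Fs := G \ E₀ with hFsdef
      set Hs := G ∩ E₀ with hHsdef
      have hFsm : MeasurableSet Fs := hG.diff hE₀m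
      have hHsm : MeasurableSet Hs := hG.inter hE₀m
      have hdisjFH : Disjoint Fs Hs := Set.disjoint_left.mpr fun x hx hx' => hx.2 hx'.2
      have hGdec : Fs ∪ Hs = G := by
        ext x; by_cases hx : x ∈ E₀ <;> simp [hFsdef, hHsdef, hx]
      have hFs : LL κ Fs E₀ + LL κ Fs E₀ ≤ volume Fs :=
        hcancel Fs hFsm fun x hx => ⟨(hGΩ hx.1).1, hx.2⟩
      have hHs : LL κ Hs E₀ + LL κ Hs E₀ ≤ volume Hs := by
        have hH2 : LL κ Hs E₀ ≤ 2⁻¹ * volume Hs := by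
          calc LL κ Hs E₀ ≤ ∫⁻ _ in Hs, (2⁻¹ : ℝ≥0∞) :=
                setLIntegral_mono measurable_const fun x hx =>
                  hle_half x (hGsub hx.1)
            _ = 2⁻¹ * volume Hs := setLIntegral_const Hs 2⁻¹
        calc LL κ Hs E₀ + LL κ Hs E₀ ≤ 2⁻¹ * volume Hs + 2⁻¹ * volume Hs :=
              add_le_add hH2 hH2
          _ = volume Hs := by rw [← add_mul, ENNReal.inv_two_add_inv_two, one_mul]
      have hsplitG : LL κ G E₀ = LL κ Fs E₀ + LL κ Hs E₀ := by
        conv_lhs => rw [← hGdec]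
        exact LL_union_left hdisjFH hHsm
      calc LL κ G E₀ + LL κ G E₀
          = (LL κ Fs E₀ + LL κ Fs E₀) + (LL κ Hs E₀ + LL κ Hs E₀) := by
            rw [hsplitG]; ring
        _ ≤ volume Fs + volume Hs := add_le_add hFs hHs
        _ = volume G := by rw [← measure_union hdisjFH hHsm, hGdec]
    -- combine
    have hsum : LL κ G (E₀ \ E₁) + LL κ G E₁ = LL κ G E₀ := by
      rw [hLLright G, ← LL_union_right hκm
        (Set.disjoint_left.mpr fun x hx hx' => hx.2 hx'.2) hE₀dm (hE₀m.inter hE₁m)]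
      congr 1
      ext x; by_cases hx : x ∈ E₁ <;> simp [hx]
    have hstep : 2 * LL κ G (E₀ \ E₁) + (LL κ G E₁ + LL κ G E₁) ≤ volume G := by
      calc 2 * LL κ G (E₀ \ E₁) + (LL κ G E₁ + LL κ G E₁)
          = (LL κ G (E₀ \ E₁) + LL κ G E₁) + (LL κ G (E₀ \ E₁) + LL κ G E₁) := by
            rw [two_mul]; ring
        _ = LL κ G E₀ + LL κ G E₀ := by rw [hsum]
        _ ≤ volume G := hcore
    have h1 : (LL κ E₁ᶜ E₁ + 2 * LL κ G (E₀ \ E₁)) + (LL κ G E₁ + LL κ G E₁)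
        ≤ (LL κ (E₁ ∪ G)ᶜ (E₁ ∪ G) + LL κ G G) + (LL κ G E₁ + LL κ G E₁) := by
      rw [hkey]
      calc (LL κ E₁ᶜ E₁ + 2 * LL κ G (E₀ \ E₁)) + (LL κ G E₁ + LL κ G E₁)
          = LL κ E₁ᶜ E₁ + (2 * LL κ G (E₀ \ E₁) + (LL κ G E₁ + LL κ G E₁)) := by ring
        _ ≤ LL κ E₁ᶜ E₁ + volume G := add_le_add_right hstep _
    exact (ENNReal.add_le_add_iff_right
      (ENNReal.add_ne_top.mpr ⟨hcfin, hcfin⟩)).mp h1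
  refine ⟨main, hE₁m, hE₁Ω, by rw [hPKE₁]; exact hPKE₁fin, ?_, ?_⟩
  · intro x hx
    rcases hx with hx | hx
    · rw [hthresh E₁ hE₁m] at hx
      have hx' : (2⁻¹ : ℝ≥0∞) < lconv κ E₀ x := lt_of_lt_of_le hx (hlconv_le x)
      exact hE₁Ω (by rw [hE₁eq]; exact hx')
    · exact hE₁Ω hx
  · intro G hG hGΩ
    exact le_trans le_self_add (main G hG hGΩ)
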